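/- arXiv:1703.01868 — 6 statements merged into one kernel-verified Lean document; each statement's English description precedes it below -/
import Mathlib

section
/- If (X,d) is a metric space and p > 1, then S_b(x,y,z) = [d(x,y) + d(y,z) + d(x,z)]^p is an S_b-metric on X (for a suitable constant b ≥ 1, e.g. b = 3^(p−1)·2^p works, or more simply some b depending on p), and it satisfies the symmetry condition S_b(x,x,y) = S_b(y,y,x) for all x,y ∈ X. -/
private lemma aux_three {a b c p : ℝ} (ha : 0 ≤ a) (hb : 0 ≤ b) (hc : 0 ≤ c)
    (hp : 0 ≤ p) : (a + b + c) ^ p ≤ 3 ^ p * (a ^ p + b ^ p + c ^ p) := by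
  set M := max a (max b c) with hM
  have hMa : a ≤ M := le_max_left _ _
  have hMb : b ≤ M := le_trans (le_max_left _ _) (le_max_right _ _)
  have hMc : c ≤ M := le_trans (le_max_right _ _) (le_max_right _ _)
  have hM0 : 0 ≤ M := le_trans ha hMa
  have h1 : (a + b + c) ^ p ≤ (3 * M) ^ p := by
    apply Real.rpow_le_rpow (by positivity) _ hp
    linarith
  have h2 : (3 * M) ^ p = 3 ^ p * M ^ p := Real.mul_rpow (by norm_num) hM0
  have h3 : M ^ p ≤ a ^ p + b ^ p + c ^ p := by
    have hap : 0 ≤ a ^ p := Real.rpow_nonneg ha p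
    have hbp : 0 ≤ b ^ p := Real.rpow_nonneg hb p
    have hcp : 0 ≤ c ^ p := Real.rpow_nonneg hc p
    rcases max_cases a (max b c) with ⟨h, _⟩ | ⟨h, _⟩
    · rw [hM, h]; linarith
    · rcases max_cases b c with ⟨h', _⟩ | ⟨h', _⟩ <;> rw [hM, h, h'] <;> linarith
  calc (a + b + c) ^ p ≤ 3 ^ p * M ^ p := h2 ▸ h1
    _ ≤ 3 ^ p * (a ^ p + b ^ p + c ^ p) := by
        apply mul_le_mul_of_nonneg_left h3 (Real.rpow_nonneg (by norm_num) p)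

theorem stmt_2 {X : Type*} [MetricSpace X] (p : ℝ) (hp : 1 < p)
    (S : X → X → X → ℝ)
    (hS : ∀ x y z, S x y z = (dist x y + dist y z + dist x z) ^ p) :
    (∃ b : ℝ, 1 ≤ b ∧
      (∀ x y z : X, S x y z = 0 ↔ x = y ∧ y = z) ∧
      (∀ x y z a : X, S x y z ≤ b * (S x x a + S y y a + S z z a))) ∧
    (∀ x y : X, S x x y = S y y x) := by
  have hp0 : 0 ≤ p := le_of_lt (lt_trans one_pos hp)
  have hpne : p ≠ 0 := by positivity
  constructor
  · refine ⟨3 ^ p, ?_, ?_, ?_⟩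
    · exact Real.one_le_rpow (by norm_num) hp0
    · intro x y z
      rw [hS]
      constructor
      · intro h
        have hsum : dist x y + dist y z + dist x z = 0 := by
          have := (Real.rpow_eq_zero (by positivity) hpne).mp h
          linarith [this]
        have h1 : dist x y = 0 := by
          have := dist_nonneg (x := y) (y := z); have := dist_nonneg (x := x) (y := z)
          have := dist_nonneg (x := x) (y := y); linarith
        have h2 : dist y z = 0 := by
          have := dist_nonneg (x := x) (y := y); have := dist_nonneg (x := x) (y := z)
          linarith [dist_nonneg (x := y) (y := z)]
        exact ⟨dist_eq_zero.mp h1, dist_eq_zero.mp h2⟩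
      · rintro ⟨rfl, rfl⟩
        simp [Real.zero_rpow hpne]
    · intro x y z a
      rw [hS, hS, hS, hS]
      simp only [dist_self, zero_add]
      have hA : 0 ≤ dist x a := dist_nonneg
      have hB : 0 ≤ dist y a := dist_nonneg
      have hC : 0 ≤ dist z a := dist_nonneg
      have key : dist x y + dist y z + dist x z ≤
          (dist x a + dist x a) + (dist y a + dist y a) + (dist z a + dist z a) := by
        have t1 : dist x y ≤ dist x a + dist y a := by
          calc dist x y ≤ dist x a + dist a y := dist_triangle _ _ _
            _ = dist x a + dist y a := by rw [dist_comm a y]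
        have t2 : dist y z ≤ dist y a + dist z a := by
          calc dist y z ≤ dist y a + dist a z := dist_triangle _ _ _
            _ = dist y a + dist z a := by rw [dist_comm a z]
        have t3 : dist x z ≤ dist x a + dist z a := by
          calc dist x z ≤ dist x a + dist a z := dist_triangle _ _ _
            _ = dist x a + dist z a := by rw [dist_comm a z]
        linarith
      calc (dist x y + dist y z + dist x z) ^ p
          ≤ ((dist x a + dist x a) + (dist y a + dist y a) + (dist z a + dist z a)) ^ p :=
            Real.rpow_le_rpow (by positivity) key hp0
        _ ≤ 3 ^ p * ((dist x a + dist x a) ^ p + (dist y a + dist y a) ^ p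
              + (dist z a + dist z a) ^ p) :=
            aux_three (by positivity) (by positivity) (by positivity) hp0
  · intro x y
    rw [hS, hS]
    rw [dist_self, dist_self, dist_comm x y]
end

section
/- The S-metric S(x,y,z) = |x−z| + |x+z−2y| on ℝ is not generated by any metric: there is no metric d on ℝ with S(x,y,z) = d(x,z) + d(y,z) for all x,y,z ∈ ℝ. -/
theorem stmt_5 :
    ¬ ∃ d : ℝ → ℝ → ℝ,
      (∀ x y, 0 ≤ d x y) ∧
      (∀ x y, d x y = 0 ↔ x = y) ∧
      (∀ x y, d x y = d y x) ∧
      (∀ x y z, d x z ≤ d x y + d y z) ∧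
      (∀ x y z : ℝ, |x - z| + |x + z - 2*y| = d x z + d y z) := by
  rintro ⟨d, _, hzero, _, _, h⟩
  have h1 := h 1 0 1
  have h2 := h 0 0 1
  have h11 : d 1 1 = 0 := (hzero 1 1).mpr rfl
  rw [h11] at h1
  norm_num [abs_of_nonneg, abs_of_nonpos] at h1 h2
  linarith
end

section
/- Let (X,S_b) be a symmetric S_b-metric space with coefficient b ≥ 1. Then d(x,y) := S_b(x,x,y) defines a b-metric on X with coefficient 3b/2, i.e., d(x,y) = 0 iff x = y, d(x,y) = d(y,x), and d(x,y) ≤ (3b/2)[d(x,z) + d(z,y)] for all x,y,z ∈ X. -/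
theorem stmt_6 {X : Type*} (b : ℝ) (hb : 1 ≤ b) (S : X → X → X → ℝ)
    (hnonneg : ∀ x y z, 0 ≤ S x y z)
    (hS1 : ∀ x y z, S x y z = 0 ↔ x = y ∧ y = z)
    (hS2 : ∀ x y z a, S x y z ≤ b * (S x x a + S y y a + S z z a))
    (hsym : ∀ x y, S x x y = S y y x) :
    let d : X → X → ℝ := fun x y => S x x y
    (∀ x y, d x y = 0 ↔ x = y) ∧
    (∀ x y, d x y = d y x) ∧
    (∀ x y z, d x y ≤ (3*b/2) * (d x z + d z y)) := by
  intro d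
  refine ⟨?_, ?_, ?_⟩
  · intro x y
    rw [show d x y = S x x y from rfl, hS1]
    simp
  · intro x y
    exact hsym x y
  · intro x y z
    have h1 : S x x y ≤ b * (S x x z + S x x z + S y y z) := hS2 x x y z
    have h2 : S x x y ≤ b * (S y y z + S y y z + S x x z) := by
      rw [hsym x y]; exact hS2 y y x z
    have hzy : d z y = S y y z := hsym z y
    show S x x y ≤ (3*b/2) * (d x z + d z y)
    rw [hzy]
    nlinarith [h1, h2]
end

section
/- For b ≥ 1, the S_b-metric S_b(x,y,z) = b(|x−z| + |x+z−2y|) on ℝ is not generated by any b-metric: there is no b-metric d on ℝ such that S_b(x,y,z) = d(x,z) + d(y,z) for all x,y,z ∈ ℝ. -/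
theorem stmt_8 (b : ℝ) (hb : 1 ≤ b) :
    ¬ ∃ (d : ℝ → ℝ → ℝ) (c : ℝ), 1 ≤ c ∧
      (∀ x y, 0 ≤ d x y) ∧
      (∀ x y, d x y = 0 ↔ x = y) ∧
      (∀ x y, d x y = d y x) ∧
      (∀ x y z, d x z ≤ c * (d x y + d y z)) ∧
      (∀ x y z : ℝ, b * (|x - z| + |x + z - 2*y|) = d x z + d y z) := by
  rintro ⟨d, c, hc, hpos, hzero, hsym, htri, heq⟩
  have h11 : d 1 1 = 0 := (hzero 1 1).mpr rfl
  have h1 := heq 0 0 1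
  have h2 := heq 0 1 1
  norm_num at h1 h2
  rw [h11] at h2
  simp at h2
  linarith
end

section
/- If T satisfies S_b(Tx,Tx,Ty) ≤ h·S_b(x,x,y) for all x,y with 0 ≤ h < 1/b², then for any x_0 ∈ X, the Picard iterates x_n = T^n x_0 satisfy S_b(x_n,x_n,x_{n+1}) ≤ h^n · S_b(x_0,x_0,x_1) for all n, and moreover for m > n, S_b(x_n,x_n,x_m) ≤ (2b·h^n)/(1−b²h) · S_b(x_0,x_0,x_1); in particular {x_n} is a Cauchy sequence. -/
theorem stmt_12 {X : Type*} (b : ℝ) (hb : 1 ≤ b) (S : X → X → X → ℝ)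
    (hnonneg : ∀ x y z, 0 ≤ S x y z)
    (hS1 : ∀ x y z, S x y z = 0 ↔ x = y ∧ y = z)
    (hS2 : ∀ x y z a, S x y z ≤ b * (S x x a + S y y a + S z z a))
    (T : X → X) (h : ℝ) (hh0 : 0 ≤ h) (hh : h < 1 / b^2)
    (hT : ∀ x y, S (T x) (T x) (T y) ≤ h * S x x y)
    (x₀ : X) (x : ℕ → X) (hx : ∀ n, x n = T^[n] x₀) :
    (∀ n, S (x n) (x n) (x (n+1)) ≤ h^n * S (x 0) (x 0) (x 1)) ∧
    (∀ n m, n < m →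
      S (x n) (x n) (x m) ≤ (2 * b * h^n) / (1 - b^2 * h) * S (x 0) (x 0) (x 1)) ∧
    (∀ ε > (0:ℝ), ∃ N, ∀ m ≥ N, ∀ n ≥ N, S (x n) (x n) (x m) < ε) := by
  have hb0 : (0:ℝ) < b := lt_of_lt_of_le one_pos hb
  have hb2 : (0:ℝ) < b ^ 2 := by positivity
  have hbh : b ^ 2 * h < 1 := by
    have := (lt_div_iff₀ hb2).mp hh
    linarith
  have hden : (0:ℝ) < 1 - b ^ 2 * h := by linarith
  have hxx : ∀ z : X, S z z z = 0 := fun z => (hS1 z z z).mpr ⟨rfl, rfl⟩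
  have hsymm : ∀ u v : X, S u u v ≤ b * S v v u := by
    intro u v
    have := hS2 u u v u
    simpa [hxx] using this
  set d0 := S (x 0) (x 0) (x 1) with hd0
  have hd0n : 0 ≤ d0 := hnonneg _ _ _
  have hstep : ∀ n, x (n + 1) = T (x n) := by
    intro n; rw [hx, hx, Function.iterate_succ_apply']
  have hA : ∀ n, S (x n) (x n) (x (n + 1)) ≤ h ^ n * d0 := by
    intro n
    induction n with
    | zero => simp [hd0]
    | succ n ih =>
      rw [hstep n, hstep (n + 1)]
      calc S (T (x n)) (T (x n)) (T (x (n + 1))) ≤ h * S (x n) (x n) (x (n + 1)) := hT _ _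
        _ ≤ h * (h ^ n * d0) := mul_le_mul_of_nonneg_left ih hh0
        _ = h ^ (n + 1) * d0 := by ring
  have h1 : h < 1 := lt_of_lt_of_le hh (by rw [div_le_one hb2]; nlinarith)
  have hB : ∀ k n, S (x n) (x n) (x (n + k + 1)) ≤ 2 * b * h ^ n / (1 - b ^ 2 * h) * d0 := by
    intro k
    induction k with
    | zero =>
      intro n
      have hpn : 0 ≤ h ^ n := pow_nonneg hh0 n
      calc S (x n) (x n) (x (n + 0 + 1)) ≤ h ^ n * d0 := by simpa using hA n
        _ ≤ 2 * b * h ^ n / (1 - b ^ 2 * h) * d0 := by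
          apply mul_le_mul_of_nonneg_right _ hd0n
          rw [le_div_iff₀ hden]
          nlinarith [mul_nonneg hpn (mul_nonneg hb2.le hh0),
            mul_nonneg hpn (sub_nonneg.mpr (by linarith : (1:ℝ) ≤ 2 * b))]
    | succ k ih =>
      intro n
      have heq : n + (k + 1) + 1 = (n + 1) + k + 1 := by ring
      rw [heq]
      have htri : S (x n) (x n) (x ((n + 1) + k + 1)) ≤
          b * (S (x n) (x n) (x (n + 1)) + S (x n) (x n) (x (n + 1)) +
            S (x ((n + 1) + k + 1)) (x ((n + 1) + k + 1)) (x (n + 1))) := hS2 _ _ _ _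
      have hsy : S (x ((n + 1) + k + 1)) (x ((n + 1) + k + 1)) (x (n + 1)) ≤
          b * S (x (n + 1)) (x (n + 1)) (x ((n + 1) + k + 1)) := hsymm _ _
      have hih : S (x (n + 1)) (x (n + 1)) (x ((n + 1) + k + 1)) ≤
          2 * b * h ^ (n + 1) / (1 - b ^ 2 * h) * d0 := ih (n + 1)
      have hAn := hA n
      have hpn : 0 ≤ h ^ n := pow_nonneg hh0 n
      have key : S (x n) (x n) (x ((n + 1) + k + 1)) ≤
          2 * b * (h ^ n * d0) + b ^ 2 * (2 * b * h ^ (n + 1) / (1 - b ^ 2 * h) * d0) := by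
        have s1 : b * S (x ((n + 1) + k + 1)) (x ((n + 1) + k + 1)) (x (n + 1)) ≤
            b * (b * S (x (n + 1)) (x (n + 1)) (x ((n + 1) + k + 1))) :=
          mul_le_mul_of_nonneg_left hsy hb0.le
        have s2 : b * (b * S (x (n + 1)) (x (n + 1)) (x ((n + 1) + k + 1))) ≤
            b * (b * (2 * b * h ^ (n + 1) / (1 - b ^ 2 * h) * d0)) :=
          mul_le_mul_of_nonneg_left (mul_le_mul_of_nonneg_left hih hb0.le) hb0.le
        have s3 : b * S (x n) (x n) (x (n + 1)) ≤ b * (h ^ n * d0) :=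
          mul_le_mul_of_nonneg_left hAn hb0.le
        nlinarith
      calc S (x n) (x n) (x ((n + 1) + k + 1)) ≤
          2 * b * (h ^ n * d0) + b ^ 2 * (2 * b * h ^ (n + 1) / (1 - b ^ 2 * h) * d0) := key
        _ = 2 * b * h ^ n / (1 - b ^ 2 * h) * d0 := by
          rw [pow_succ, div_eq_mul_inv, div_eq_mul_inv]
          linear_combination (-(2 * b * h ^ n * d0)) * mul_inv_cancel₀ hden.ne'
  refine ⟨hA, ?_, ?_⟩
  · intro n m hnm
    obtain ⟨k, rfl⟩ : ∃ k, m = n + k + 1 := ⟨m - n - 1, by omega⟩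
    exact hB k n
  · intro ε hε
    set C : ℝ := 2 * b / (1 - b ^ 2 * h) * d0 with hC
    have hCn : 0 ≤ C := by positivity
    set K : ℝ := b * C with hK
    have hKn : 0 ≤ K := by positivity
    have htend : Filter.Tendsto (fun n => K * h ^ n) Filter.atTop (nhds 0) := by
      have := tendsto_pow_atTop_nhds_zero_of_lt_one hh0 h1
      simpa using this.const_mul K
    have hev : ∀ᶠ n in Filter.atTop, K * h ^ n < ε :=
      htend.eventually_lt_const hε
    obtain ⟨N, hN⟩ := Filter.eventually_atTop.mp hev
    refine ⟨N, fun m hm n hn => ?_⟩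
    have hKN : K * h ^ N < ε := hN N le_rfl
    have hmon : ∀ j, N ≤ j → h ^ j ≤ h ^ N := fun j hj =>
      pow_le_pow_of_le_one hh0 h1.le hj
    rcases lt_trichotomy n m with hlt | heq | hgt
    · obtain ⟨k, rfl⟩ : ∃ k, m = n + k + 1 := ⟨m - n - 1, by omega⟩
      have := hB k n
      have hbd : 2 * b * h ^ n / (1 - b ^ 2 * h) * d0 ≤ K * h ^ n := by
        have hpn : 0 ≤ h ^ n := pow_nonneg hh0 n
        have hDnn : 0 ≤ (1 - b ^ 2 * h)⁻¹ := by positivity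
        rw [hK, hC, div_eq_mul_inv, div_eq_mul_inv]
        nlinarith [mul_nonneg (sub_nonneg.mpr hb)
          (mul_nonneg (mul_nonneg (mul_nonneg hb0.le hpn) hDnn) hd0n)]
      calc S (x n) (x n) (x (n + k + 1)) ≤ K * h ^ n := le_trans this hbd
        _ ≤ K * h ^ N := mul_le_mul_of_nonneg_left (hmon n hn) hKn
        _ < ε := hKN
    · subst heq
      calc S (x n) (x n) (x n) = 0 := hxx _
        _ < ε := hε
    · obtain ⟨k, rfl⟩ : ∃ k, n = m + k + 1 := ⟨n - m - 1, by omega⟩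
      have h2 := hsymm (x (m + k + 1)) (x m)
      have h3 : b * S (x m) (x m) (x (m + k + 1)) ≤
          b * (2 * b * h ^ m / (1 - b ^ 2 * h) * d0) :=
        mul_le_mul_of_nonneg_left (hB k m) hb0.le
      have hbd : b * (2 * b * h ^ m / (1 - b ^ 2 * h) * d0) = K * h ^ m := by
        rw [hK, hC]; field_simp [hden.ne']
      calc S (x (m + k + 1)) (x (m + k + 1)) (x m) ≤ K * h ^ m := by
            rw [← hbd]; exact le_trans h2 h3
        _ ≤ K * h ^ N := mul_le_mul_of_nonneg_left (hmon m hm) hKn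
        _ < ε := hKN
end

section
/- Let S(x,y,z) = |x−z| + |x+z−2y| on ℝ and define T : ℝ → ℝ by Tx = x + 50 if |x−1| = 1 and Tx = 45 otherwise. Then T satisfies S(Tx,Tx,Ty) ≤ (1/5)·max{S(Tx,Tx,x), S(Tx,Tx,y), S(Ty,Ty,y), S(Ty,Ty,x)} for all x,y ∈ ℝ, T has the unique fixed point 45, but there is no h < 1 with S(Tx,Tx,Ty) ≤ h·S(x,x,y) for all x,y (witness x = 1, y = 0, where S(T1,T1,T0) = 10 and S(1,1,0) = 2). -/
noncomputable def T17 : ℝ → ℝ := fun x => if |x - 1| = 1 then x + 50 else 45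

lemma T17_cases (x : ℝ) : (x = 0 ∧ T17 x = 50) ∨ (x = 2 ∧ T17 x = 52) ∨ T17 x = 45 := by
  unfold T17
  by_cases h : |x - 1| = 1
  · rcases (abs_eq (by norm_num : (0:ℝ) ≤ 1)).mp h with h1 | h1
    · right; left
      have hx : x = 2 := by linarith
      subst hx; norm_num
    · left
      have hx : x = 0 := by linarith
      subst hx; norm_num
  · right; right; simp [h]

theorem stmt_17 :
    let S : ℝ → ℝ → ℝ → ℝ := fun x y z => |x - z| + |x + z - 2*y|
    (∀ x y : ℝ, S (T17 x) (T17 x) (T17 y) ≤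
      (1/5) * max (max (S (T17 x) (T17 x) x) (S (T17 x) (T17 x) y))
                  (max (S (T17 y) (T17 y) y) (S (T17 y) (T17 y) x))) ∧
    (∃! x : ℝ, T17 x = x) ∧ T17 45 = 45 ∧
    ¬ ∃ h : ℝ, h < 1 ∧ ∀ x y : ℝ, S (T17 x) (T17 x) (T17 y) ≤ h * S x x y := by
  intro S
  have h45 : T17 45 = 45 := by unfold T17; norm_num
  have h1 : T17 1 = 45 := by unfold T17; norm_num
  have h0 : T17 0 = 50 := by unfold T17; norm_num
  refine ⟨?_, ⟨45, h45, ?_⟩, h45, ?_⟩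
  · intro x y
    rcases T17_cases x with ⟨hx0, hx⟩ | ⟨hx0, hx⟩ | hx <;>
      rcases T17_cases y with ⟨hy0, hy⟩ | ⟨hy0, hy⟩ | hy <;>
      subst_vars <;> simp only [S, hx, hy] <;> norm_num
    · have h' : (100:ℝ) ≤ 100 ⊔ (|50 - y| + |50 + y - 100|) ⊔ ((|45 - y| + |45 + y - 90|) ⊔ 90) :=
        le_sup_of_le_left le_sup_left
      linarith
    · have h' : (100:ℝ) ≤ 100 ⊔ (|52 - y| + |52 + y - 104|) ⊔ ((|45 - y| + |45 + y - 90|) ⊔ 86) :=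
        le_sup_of_le_left le_sup_left
      linarith
    · have h' : (100:ℝ) ≤ (|45 - x| + |45 + x - 90|) ⊔ 90 ⊔ (100 ⊔ (|50 - x| + |50 + x - 100|)) :=
        le_sup_of_le_right le_sup_left
      linarith
    · have h' : (100:ℝ) ≤ (|45 - x| + |45 + x - 90|) ⊔ 86 ⊔ (100 ⊔ (|52 - x| + |52 + x - 104|)) :=
        le_sup_of_le_right le_sup_left
      linarith
    · left; left; positivity
  · intro x hx
    rcases T17_cases x with ⟨hx0, h⟩ | ⟨hx0, h⟩ | h <;> subst_vars <;> linarith [hx]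
  · rintro ⟨h, hh1, hall⟩
    have := hall 1 0
    simp only [S, h1, h0] at this
    rw [show |(45:ℝ) - 50| = 5 by norm_num, show |(45:ℝ)+50-2*45| = 5 by norm_num,
        show |(1:ℝ) - 0| = 1 by norm_num, show |(1:ℝ)+0-2*1| = 1 by norm_num] at this
    nlinarith
end
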